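/- For a rational polyhedron P ⊆ ℝ^m containing an affine line with integer direction vector u ≠ 0, the integer-point transform satisfies t^u · σ(P) = σ(P), and hence σ(P) = 0. -/

import Mathlib

open scoped BigOperators Classical

/-- Index type for Gelfand–Tsetlin pattern positions: (row, column), 0-based. -/
abbrev GTIdx (n : ℕ) := Fin n × Fin n

/-- A position (i,j) is a valid pattern position iff i + j < n (row i has columns 0..n-1-i). -/
def GTValid (n : ℕ) (p : GTIdx n) : Prop := (p.1 : ℕ) + (p.2 : ℕ) < n

/-- Entry of a real point at natural-number coordinates (0 outside the index range). -/
noncomputable def entryR {n : ℕ} (A : GTIdx n → ℝ) (i j : ℕ) : ℝ :=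
  if h : i < n ∧ j < n then A (⟨i, h.1⟩, ⟨j, h.2⟩) else 0

/-- Entry of an integer point at natural-number coordinates (0 outside the index range). -/
def entryZ {n : ℕ} (A : GTIdx n → ℤ) (i j : ℕ) : ℤ :=
  if h : i < n ∧ j < n then A (⟨i, h.1⟩, ⟨j, h.2⟩) else 0

/-- The Gelfand–Tsetlin polytope of λ: top row equal to λ, interlacing inequalities,
and (as a normalization embedding it in a finite-dimensional space) zero at invalid positions. -/
def GTPoly (n : ℕ) (lam : Fin n → ℝ) : Set (GTIdx n → ℝ) :=
  {A | (∀ j : Fin n, entryR A 0 j = lam j)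
    ∧ (∀ i j : ℕ, i + 1 + j < n →
        entryR A (i+1) j ≤ entryR A i j ∧ entryR A i (j+1) ≤ entryR A (i+1) j)
    ∧ (∀ p : GTIdx n, ¬ GTValid n p → A p = 0)}

/-- Integer Gelfand–Tsetlin patterns with top row λ. -/
def GTPat (n : ℕ) (lam : Fin n → ℤ) : Set (GTIdx n → ℤ) :=
  {A | (∀ j : Fin n, entryZ A 0 j = lam j)
    ∧ (∀ i j : ℕ, i + 1 + j < n →
        entryZ A (i+1) j ≤ entryZ A i j ∧ entryZ A i (j+1) ≤ entryZ A (i+1) j)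
    ∧ (∀ p : GTIdx n, ¬ GTValid n p → A p = 0)}

/-- The weight of a pattern: μ_i = (sum of row i-1) - (sum of row i), 1-based;
here `i : Fin n` is 0-based, so `wtZ A i = (row i sum) - (row (i+1) sum)`. -/
def wtZ {n : ℕ} (A : GTIdx n → ℤ) (i : Fin n) : ℤ :=
  (∑ j : Fin n, entryZ A i j) - ∑ j : Fin n, entryZ A ((i : ℕ) + 1) j

noncomputable def wtR {n : ℕ} (A : GTIdx n → ℝ) (i : Fin n) : ℝ :=
  (∑ j : Fin n, entryR A i j) - ∑ j : Fin n, entryR A ((i : ℕ) + 1) j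

/-- Multiset of entries of row i. -/
noncomputable def rowM {n : ℕ} (A : GTIdx n → ℝ) (i : ℕ) : Multiset ℝ :=
  (Finset.univ.filter (fun j : Fin n => i + (j : ℕ) < n)).val.map (fun j => entryR A i (j : ℕ))

/-- Valid pattern positions (the nodes of the ambient graph T). -/
abbrev GTNode (n : ℕ) := {p : GTIdx n // GTValid n p}

/-- `upEdge n p q` : q is an upper neighbour of p in the triangular graph T,
i.e. q = (i-1, j) or (i-1, j+1) where p = (i, j). -/
def upEdge (n : ℕ) (p q : GTIdx n) : Prop :=
  GTValid n p ∧ GTValid n q ∧ (q.1 : ℕ) + 1 = (p.1 : ℕ) ∧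
    ((q.2 : ℕ) = (p.2 : ℕ) ∨ (q.2 : ℕ) = (p.2 : ℕ) + 1)

/-- The equality graph Γ_v of a point v of the GT polytope: nodes are valid positions,
edges join a position to an upper neighbour carrying an equal entry. -/
def Gamma (n : ℕ) (A : GTIdx n → ℝ) : SimpleGraph (GTNode n) where
  Adj p q := (upEdge n p.1 q.1 ∨ upEdge n q.1 p.1) ∧ A p.1 = A q.1
  symm := by
    constructor
    rintro p q ⟨h, e⟩
    exact ⟨h.symm, e.symm⟩
  loopless := by
    constructor
    rintro p ⟨h | h, _⟩ <;> exact absurd h.2.2.1 (by omega)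

/-- Tangent cone of a convex set P at a point v. -/
def tangentCone {E : Type*} [AddCommGroup E] [Module ℝ E] (P : Set E) (v : E) : Set E :=
  {y | ∃ x ∈ P, ∃ t : ℝ, 0 ≤ t ∧ y = v + t • (x - v)}

/-- The ray from v in direction ε. -/
def raySet {E : Type*} [AddCommGroup E] [Module ℝ E] (v ε : E) : Set E :=
  {y | ∃ t : ℝ, 0 ≤ t ∧ y = v + t • ε}

/-- ε is the direction of an edge (one-dimensional extreme face) of the cone C with apex v. -/
def IsEdgeDir {E : Type*} [AddCommGroup E] [Module ℝ E] (C : Set E) (v ε : E) : Prop :=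
  ε ≠ 0 ∧ IsExtreme ℝ C (raySet v ε)

/-- Direction-vector pattern for edges at a simplicial vertex: all nonzero coordinates lie
in rows a..b, one per row, and all are equal to c. -/
def simpDir (n : ℕ) (a b : ℕ) (c : ℝ) (ε : GTIdx n → ℝ) : Prop :=
  (∀ p : GTIdx n, ε p ≠ 0 → GTValid n p ∧ a ≤ (p.1 : ℕ) ∧ (p.1 : ℕ) ≤ b)
  ∧ (∀ r : ℕ, a ≤ r → r ≤ b → ∃! p : GTIdx n, (p.1 : ℕ) = r ∧ ε p ≠ 0)
  ∧ (∀ p : GTIdx n, ε p ≠ 0 → ε p = c)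

/-- A simplicial vertex: a vertex (extreme point) of the GT polytope whose equality graph
is acyclic. -/
def IsSimpVertex (n : ℕ) (lam : Fin n → ℝ) (A : GTIdx n → ℝ) : Prop :=
  A ∈ Set.extremePoints ℝ (GTPoly n lam) ∧ (Gamma n A).IsAcyclic

/- ### Rational functions, integer-point transforms, and the specialization F -/

/-- Field of rational functions in variables indexed by ι. -/
abbrev KK (ι : Type) := FractionRing (MvPolynomial ι ℚ)

/-- The monomial t^u, u ∈ ℤ^ι, inside the rational function field. -/
noncomputable def tmon (ι : Type) [Fintype ι] (u : ι → ℤ) : KK ι :=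
  ∏ i, (algebraMap (MvPolynomial ι ℚ) (KK ι) (MvPolynomial.X i)) ^ (u i)

/-- Indicator (as coefficient function of a formal Laurent series) of the integer points of S. -/
noncomputable def indSet {ι : Type} (S : Set (ι → ℝ)) : (ι → ℤ) → ℚ :=
  fun a => if (fun i => (a i : ℝ)) ∈ S then 1 else 0

/-- `Represents r f` : the rational function r is the integer-point transform of the formal
Laurent series with coefficient function f, i.e. there is a nonzero Laurent polynomial q such
that q·f is a (finitely supported) Laurent polynomial g and r·q = g as rational functions. -/
noncomputable def Represents {ι : Type} [Fintype ι] (r : KK ι) (f : (ι → ℤ) → ℚ) : Prop :=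
  ∃ q : (ι → ℤ) →₀ ℚ, q ≠ 0 ∧ ∃ g : (ι → ℤ) →₀ ℚ,
    (∀ a, g a = ∑ b ∈ q.support, q b * f (a - b)) ∧
    r * (∑ b ∈ q.support, (q b : KK ι) * tmon ι b)
      = ∑ a ∈ g.support, (g a : KK ι) * tmon ι a

/-- Field of rational functions in x_1, ..., x_n. -/
abbrev Kx (n : ℕ) := FractionRing (MvPolynomial (Fin n) ℚ)

/-- The variable x_i. -/
noncomputable def xv (n : ℕ) (i : Fin n) : Kx n :=
  algebraMap (MvPolynomial (Fin n) ℚ) (Kx n) (MvPolynomial.X i)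

/-- The substitution underlying F: t_{0,j} ↦ x_1 and t_{i,j} ↦ x_i⁻¹ x_{i+1} for i ≥ 1
(1-based x's; in our 0-based indexing t_{i,·} ↦ x_{i-1}⁻¹ · x_i for i ≥ 1, t_{0,·} ↦ x_0). -/
noncomputable def xsub (n : ℕ) (p : GTIdx n) : Kx n :=
  if (p.1 : ℕ) = 0 then xv n p.1
  else (xv n (⟨(p.1 : ℕ) - 1, Nat.lt_of_le_of_lt (Nat.sub_le _ _) p.1.isLt⟩ : Fin n))⁻¹ * xv n p.1

/-- The specialization F on Laurent polynomials, as a ring homomorphism. -/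
noncomputable def phiF (n : ℕ) : MvPolynomial (GTIdx n) ℚ →+* Kx n :=
  MvPolynomial.eval₂Hom (Rat.castHom (Kx n)) (xsub n)

/-- `FSpec n r y` : the specialization F of the rational function r (in the t-variables)
is defined and equal to y; i.e. r = p/q with F(q) ≠ 0 and y = F(p)/F(q). -/
noncomputable def FSpec (n : ℕ) (r : KK (GTIdx n)) (y : Kx n) : Prop :=
  ∃ p q : MvPolynomial (GTIdx n) ℚ, phiF n q ≠ 0 ∧
    r * algebraMap (MvPolynomial (GTIdx n) ℚ) (KK (GTIdx n)) q
      = algebraMap (MvPolynomial (GTIdx n) ℚ) (KK (GTIdx n)) p ∧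
    y * phiF n q = phiF n p

/-- The monomial e^μ = x^μ for an integral weight μ. -/
noncomputable def emon {n : ℕ} (mu : Fin n → ℤ) : Kx n := ∏ i, xv n i ^ mu i

/-- ρ = (n-1, n-2, ..., 0). -/
def rhoW (n : ℕ) (i : Fin n) : ℤ := (n : ℤ) - 1 - (i : ℤ)

/-- The Schur (Laurent) polynomial of λ, defined by Weyl's character formula
(bialternant form). -/
noncomputable def schur (n : ℕ) (lam : Fin n → ℤ) : Kx n :=
  (∑ w : Equiv.Perm (Fin n), ((Equiv.Perm.sign w : ℤ) : Kx n)
      * ∏ i, xv n i ^ (lam (w⁻¹ i) + rhoW n (w⁻¹ i)))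
  / (∑ w : Equiv.Perm (Fin n), ((Equiv.Perm.sign w : ℤ) : Kx n)
      * ∏ i, xv n i ^ (rhoW n (w⁻¹ i)))

/-- The summand w(e^λ / Π_{i<j} (1 - x_j/x_i)) of Weyl's character formula. -/
noncomputable def weylTerm (n : ℕ) (lam : Fin n → ℤ) (w : Equiv.Perm (Fin n)) : Kx n :=
  (∏ i, xv n (w i) ^ lam i)
    / ∏ p ∈ Finset.univ.filter (fun p : Fin n × Fin n => p.1 < p.2),
        (1 - xv n (w p.2) / xv n (w p.1))

/-- Integer version of the edge-direction pattern. -/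
def simpDirZ (n : ℕ) (a b : ℕ) (c : ℤ) (ε : GTIdx n → ℤ) : Prop :=
  (∀ p : GTIdx n, ε p ≠ 0 → GTValid n p ∧ a ≤ (p.1 : ℕ) ∧ (p.1 : ℕ) ≤ b)
  ∧ (∀ r : ℕ, a ≤ r → r ≤ b → ∃! p : GTIdx n, (p.1 : ℕ) = r ∧ ε p ≠ 0)
  ∧ (∀ p : GTIdx n, ε p ≠ 0 → ε p = c)

/-- F(t^u): the specialization of the Laurent monomial t^u. -/
noncomputable def Fmon (n : ℕ) (u : GTIdx n → ℤ) : Kx n := ∏ p, xsub n p ^ u p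

/-- A rational polytope in ℝ^m: a bounded set cut out by finitely many integral
linear inequalities. -/
def IsRatPolytope (m : ℕ) (P : Set (Fin m → ℝ)) : Prop :=
  Bornology.IsBounded P ∧ ∃ (k : ℕ) (a : Fin k → Fin m → ℤ) (b : Fin k → ℤ),
    P = {x | ∀ i, ∑ j, (a i j : ℝ) * x j ≤ (b i : ℝ)}

/-- A rational polyhedron in ℝ^m. -/
def IsRatPolyhedron (m : ℕ) (P : Set (Fin m → ℝ)) : Prop :=
  ∃ (k : ℕ) (a : Fin k → Fin m → ℤ) (b : Fin k → ℤ),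
    P = {x | ∀ i, ∑ j, (a i j : ℝ) * x j ≤ (b i : ℝ)}

/-- The cone C_Δ attached to a connected component Δ = c of the equality graph Γ_v:
vectors supported on the nodes of Δ, vanishing at the top (row-0) node of Δ, and
satisfying the interlacing inequalities along the edges of Δ. -/
noncomputable def compCone (n : ℕ) (A : GTIdx n → ℝ) (c : (Gamma n A).ConnectedComponent) :
    Set (GTIdx n → ℝ) :=
  {x | (∀ p : GTIdx n,
          (¬ ∃ hp : GTValid n p, (Gamma n A).connectedComponentMk ⟨p, hp⟩ = c) → x p = 0)
    ∧ (∀ p : GTNode n, (Gamma n A).connectedComponentMk p = c → (p.1.1 : ℕ) = 0 → x p.1 = 0)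
    ∧ (∀ p q : GTNode n, (Gamma n A).connectedComponentMk p = c →
        upEdge n p.1 q.1 → A p.1 = A q.1 →
        (((q.1.2 : ℕ) = (p.1.2 : ℕ)) → x p.1 ≤ x q.1) ∧
        (((q.1.2 : ℕ) = (p.1.2 : ℕ) + 1) → x q.1 ≤ x p.1))}


section Aux17
variable {ι : Type} [Fintype ι]

omit [Fintype ι] in
lemma algX_ne_zero (i : ι) :
    (algebraMap (MvPolynomial ι ℚ) (KK ι) (MvPolynomial.X i)) ≠ 0 := by
  have h := IsFractionRing.injective (MvPolynomial ι ℚ) (KK ι)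
  simp [map_eq_zero_iff _ h, MvPolynomial.X_ne_zero (R := ℚ) i]

lemma tmon_add (u v : ι → ℤ) : tmon ι (u + v) = tmon ι u * tmon ι v := by
  unfold tmon
  rw [← Finset.prod_mul_distrib]
  exact Finset.prod_congr rfl fun i _ => zpow_add₀ (algX_ne_zero i) _ _

lemma tmon_nat (n : ι →₀ ℕ) :
    tmon ι (fun i => (n i : ℤ))
      = algebraMap (MvPolynomial ι ℚ) (KK ι) (MvPolynomial.monomial n (1 : ℚ)) := by
  unfold tmon
  rw [← MvPolynomial.prod_X_pow_eq_monomial, map_prod,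
      ← Finset.prod_subset (Finset.subset_univ n.support)
        (fun x _ hx => by simp [Finsupp.notMem_support_iff.mp hx])]
  exact Finset.prod_congr rfl fun i _ => by rw [map_pow, zpow_natCast]

omit [Fintype ι] in
lemma ratCast_eq_alg (c : ℚ) :
    (c : KK ι) = algebraMap (MvPolynomial ι ℚ) (KK ι) (MvPolynomial.C c) :=
  (eq_ratCast ((algebraMap (MvPolynomial ι ℚ) (KK ι)).comp (MvPolynomial.C)) c).symm

lemma tmon_ne_zero (u : ι → ℤ) : tmon ι u ≠ 0 := by
  unfold tmon
  exact Finset.prod_ne_zero_iff.mpr fun i _ => zpow_ne_zero _ (algX_ne_zero i)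

end Aux17

/-- a rational polyhedron containing an affine line with integer direction
u ≠ 0 has integer-point transform satisfying t^u σ(P) = σ(P), hence σ(P) = 0. -/
theorem statement17 (m : ℕ) (P : Set (Fin m → ℝ)) (hP : IsRatPolyhedron m P)
    (u : Fin m → ℤ) (hu : u ≠ 0)
    (hline : ∃ x : Fin m → ℝ, ∀ t : ℝ, (fun i => x i + t * (u i : ℝ)) ∈ P)
    (r : KK (Fin m)) (hr : Represents r (indSet P)) :
    tmon (Fin m) u * r = r ∧ r = 0 := by
  classical
  obtain ⟨k, a, b, hPeq⟩ := hP
  obtain ⟨x, hx⟩ := hline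
  -- The defining functionals vanish on u
  have hmem : ∀ t : ℝ, ∀ i, ∑ j, (a i j : ℝ) * (x j + t * (u j : ℝ)) ≤ (b i : ℝ) := by
    intro t i
    have h1 := hx t
    rw [hPeq] at h1
    exact h1 i
  have hsum : ∀ t : ℝ, ∀ i, ∑ j, (a i j : ℝ) * (x j + t * (u j : ℝ))
      = (∑ j, (a i j : ℝ) * x j) + t * ∑ j, (a i j : ℝ) * (u j : ℝ) := by
    intro t i
    rw [Finset.mul_sum, ← Finset.sum_add_distrib]
    exact Finset.sum_congr rfl fun j _ => by ring
  have hau : ∀ i, (∑ j, (a i j : ℝ) * (u j : ℝ)) = 0 := by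
    intro i
    by_contra hs
    have h1 := hmem (((b i : ℝ) - (∑ j, (a i j : ℝ) * x j) + 1)
        / (∑ j, (a i j : ℝ) * (u j : ℝ))) i
    rw [hsum, div_mul_cancel₀ _ hs] at h1
    linarith
  -- Integer translation invariance of P
  have hPinv : ∀ c : Fin m → ℤ,
      ((fun i => ((c i + u i : ℤ) : ℝ)) ∈ P) ↔ ((fun i => ((c i : ℤ) : ℝ)) ∈ P) := by
    intro c
    rw [hPeq]
    simp only [Set.mem_setOf_eq]
    refine forall_congr' fun i => ?_
    have key : ∑ j, (a i j : ℝ) * ((c j + u j : ℤ) : ℝ)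
        = ∑ j, (a i j : ℝ) * ((c j : ℤ) : ℝ) := by
      have h2 : ∑ j, (a i j : ℝ) * (((c j : ℤ) : ℝ) + ((u j : ℤ) : ℝ))
          = (∑ j, (a i j : ℝ) * ((c j : ℤ) : ℝ)) + ∑ j, (a i j : ℝ) * ((u j : ℤ) : ℝ) := by
        rw [← Finset.sum_add_distrib]
        exact Finset.sum_congr rfl fun j _ => by ring
      push_cast
      rw [h2, hau i, add_zero]
    rw [key]
  have hf : ∀ c : Fin m → ℤ, indSet P (c + u) = indSet P c := by
    intro c
    simp only [indSet, Pi.add_apply]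
    exact if_congr (hPinv c) rfl rfl
  obtain ⟨q, hq, g, hg, hrq⟩ := hr
  -- g is u-periodic, hence zero
  have hginv : ∀ c : Fin m → ℤ, g (c + u) = g c := by
    intro c
    rw [hg, hg]
    refine Finset.sum_congr rfl fun v _ => ?_
    have h3 : c + u - v = (c - v) + u := by ring
    rw [h3, hf]
  have hg0 : g = 0 := by
    by_contra h0
    obtain ⟨a0, ha0⟩ := Finsupp.ne_iff.mp h0
    have hk : ∀ n : ℕ, g (a0 + (n : ℤ) • u) ≠ 0 := by
      intro n
      induction n with
      | zero => simpa using ha0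
      | succ n ih =>
        have hstep : a0 + ((n + 1 : ℕ) : ℤ) • u = (a0 + (n : ℤ) • u) + u := by
          push_cast
          rw [add_smul, one_smul, add_assoc]
        rw [hstep, hginv]
        exact ih
    obtain ⟨i0, hi0⟩ := Function.ne_iff.mp hu
    have hu0 : u i0 ≠ 0 := by simpa using hi0
    have hinj : Function.Injective (fun n : ℕ => a0 + (n : ℤ) • u) := by
      intro k1 k2 hke
      have h4 := congrFun hke i0
      simp only [Pi.add_apply, Pi.smul_apply, smul_eq_mul] at h4
      have h5 : (k1 : ℤ) * u i0 = (k2 : ℤ) * u i0 := by linarith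
      exact_mod_cast mul_right_cancel₀ hu0 h5
    have hmemsup : ∀ n : ℕ, a0 + (n : ℤ) • u ∈ (↑g.support : Set (Fin m → ℤ)) :=
      fun n => Finsupp.mem_support_iff.mpr (hk n)
    exact (Set.infinite_of_injective_forall_mem hinj hmemsup) g.support.finite_toSet
  have hrq0 : r * (∑ v ∈ q.support, ((q v : ℚ) : KK (Fin m)) * tmon (Fin m) v) = 0 := by
    rw [hrq, hg0]
    simp
  -- The denominator is nonzero
  set N : Fin m → ℕ := fun i => q.support.sup fun v => (-(v i)).toNat with hNdef
  have hNle : ∀ v ∈ q.support, ∀ i, 0 ≤ v i + (N i : ℤ) := by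
    intro v hv i
    have h6 : (-(v i)).toNat ≤ N i := Finset.le_sup (f := fun v => (-(v i)).toNat) hv
    omega
  set mb : (Fin m → ℤ) → (Fin m →₀ ℕ) :=
    fun v => Finsupp.equivFunOnFinite.symm (fun i => (v i + (N i : ℤ)).toNat) with hmbdef
  have hmbv : ∀ v ∈ q.support, (fun i => ((mb v i : ℕ) : ℤ)) = v + (fun i => (N i : ℤ)) := by
    intro v hv
    funext i
    have := hNle v hv i
    simp only [hmbdef, Finsupp.equivFunOnFinite_symm_apply_apply, Pi.add_apply]
    omega
  have hQt : (∑ v ∈ q.support, ((q v : ℚ) : KK (Fin m)) * tmon (Fin m) v)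
        * tmon (Fin m) (fun i => (N i : ℤ))
      = algebraMap (MvPolynomial (Fin m) ℚ) (KK (Fin m))
          (∑ v ∈ q.support, MvPolynomial.monomial (mb v) (q v)) := by
    rw [Finset.sum_mul, map_sum]
    refine Finset.sum_congr rfl fun v hv => ?_
    rw [mul_assoc, ← tmon_add, ← hmbv v hv, tmon_nat,
        show MvPolynomial.monomial (mb v) (q v)
            = MvPolynomial.C (q v) * MvPolynomial.monomial (mb v) (1 : ℚ) by
          rw [MvPolynomial.C_mul_monomial, mul_one],
        map_mul, ← ratCast_eq_alg]
  have hPoly : (∑ v ∈ q.support, MvPolynomial.monomial (mb v) (q v)) ≠ 0 := by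
    obtain ⟨b0, hb0⟩ := Finsupp.support_nonempty_iff.mpr hq
    intro hzero
    have hmbinj : ∀ v ∈ q.support, mb v = mb b0 → v = b0 := by
      intro v hv he
      funext i
      have h1 := hNle v hv i
      have h2 := hNle b0 hb0 i
      have h3 := congrArg (fun f : Fin m →₀ ℕ => (f i : ℕ)) he
      simp only [hmbdef, Finsupp.equivFunOnFinite_symm_apply_apply] at h3
      omega
    have hc := congrArg (MvPolynomial.coeff (mb b0)) hzero
    rw [MvPolynomial.coeff_sum, Finset.sum_eq_single b0
        (fun v hv hne => by
          rw [MvPolynomial.coeff_monomial, if_neg (fun he => hne (hmbinj v hv he))])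
        (fun h => absurd hb0 h)] at hc
    rw [MvPolynomial.coeff_monomial, if_pos rfl] at hc
    exact Finsupp.mem_support_iff.mp hb0 (by simpa using hc)
  have hQne : (∑ v ∈ q.support, ((q v : ℚ) : KK (Fin m)) * tmon (Fin m) v) ≠ 0 := by
    intro h
    rw [h, zero_mul] at hQt
    exact hPoly ((map_eq_zero_iff _
      (IsFractionRing.injective (MvPolynomial (Fin m) ℚ) (KK (Fin m)))).mp hQt.symm)
  have hr0 : r = 0 := by
    rcases mul_eq_zero.mp hrq0 with h | h
    · exact h
    · exact absurd h hQne
  exact ⟨by rw [hr0, mul_zero], hr0⟩
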